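/- Let A → R be a flat ring homomorphism of commutative Noetherian rings and a ∈ R. If for every prime ideal p of A the image of a in R/pR is not a zero divisor on R/pR, then a is not a zero divisor on R. -/

import Mathlib

open TensorProduct in
lemma key_colon_flat (A R : Type*) [CommRing A] [CommRing R] [Algebra A R]
    [Module.Flat A R] (I : Ideal A) (x : A) (r : R)
    (hr : algebraMap A R x * r ∈ Ideal.map (algebraMap A R) I) :
    r ∈ Ideal.map (algebraMap A R) (I.colon (Ideal.span {x})) := by
  set J := I.colon (Ideal.span {x}) with hJ
  have hker : (J : Submodule A A) = LinearMap.ker ((Submodule.mkQ (I : Submodule A A)) ∘ₗ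
      LinearMap.lsmul A A x) := by
    ext y
    simp only [LinearMap.mem_ker, LinearMap.comp_apply, LinearMap.lsmul_apply,
      Submodule.mkQ_apply, Submodule.Quotient.mk_eq_zero]
    rw [hJ, Ideal.mem_colon_span_singleton, mul_comm]
    rfl
  set f : (A ⧸ J) →ₗ[A] (A ⧸ I) := Submodule.liftQ _ _ hker.le with hf
  have hfinj : Function.Injective f := by
    rw [← LinearMap.ker_eq_bot, hf]
    exact Submodule.ker_liftQ_eq_bot' _ _ hker
  have htinj : Function.Injective (f.rTensor R) :=
    Module.Flat.rTensor_preserves_injective_linearMap f hfinj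
  set g : (R ⧸ (J • (⊤ : Submodule A R))) →ₗ[A] (R ⧸ (I • (⊤ : Submodule A R))) :=
    (quotTensorEquivQuotSMul R I).toLinearMap ∘ₗ f.rTensor R ∘ₗ
      (quotTensorEquivQuotSMul R J).symm.toLinearMap with hg
  have hginj : Function.Injective g := by
    simp only [hg, LinearMap.coe_comp, LinearEquiv.coe_coe]
    exact (quotTensorEquivQuotSMul R I).injective.comp
      (htinj.comp (quotTensorEquivQuotSMul R J).symm.injective)
  have hgmk : ∀ s : R, g (Submodule.Quotient.mk s) = Submodule.Quotient.mk (x • s) := by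
    intro s
    simp only [hg, LinearMap.coe_comp, LinearEquiv.coe_coe, Function.comp_apply,
      quotTensorEquivQuotSMul_symm_mk]
    have : f.rTensor R ((Ideal.Quotient.mk J 1) ⊗ₜ[A] s) =
        (Ideal.Quotient.mk I x) ⊗ₜ[A] s := by
      rw [LinearMap.rTensor_tmul]
      congr 1
      show f (Submodule.Quotient.mk 1) = _
      rw [hf, Submodule.liftQ_apply]
      simp
    rw [show ((1 : A ⧸ J) ⊗ₜ[A] s) = (Ideal.Quotient.mk J 1) ⊗ₜ[A] s from rfl, this]
    exact quotTensorEquivQuotSMul_mk_tmul I x s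
  have h1 : x • r ∈ I • (⊤ : Submodule A R) := by
    rw [Ideal.smul_top_eq_map]
    simpa [Algebra.smul_def] using hr
  have h2 : g (Submodule.Quotient.mk r) = 0 := by
    rw [hgmk, Submodule.Quotient.mk_eq_zero]; exact h1
  have h3 : (Submodule.Quotient.mk r : R ⧸ (J • (⊤ : Submodule A R))) = 0 := by
    apply hginj; rw [h2, map_zero]
  rw [Submodule.Quotient.mk_eq_zero, Ideal.smul_top_eq_map] at h3
  exact h3

/-- If `A → R` is a flat homomorphism of commutative Noetherian rings and `a : R`
is such that for every prime `p` of `A` the image of `a` in `R/pR` is a non-zerodivisor, then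
`a` is a non-zerodivisor in `R`. -/
theorem nonZeroDivisor_of_fiberwise_nonZeroDivisor
    (A R : Type*) [CommRing A] [CommRing R]
    [IsNoetherianRing A] [IsNoetherianRing R]
    [Algebra A R] [Module.Flat A R] (a : R)
    (h : ∀ p : Ideal A, p.IsPrime →
      Ideal.Quotient.mk (Ideal.map (algebraMap A R) p) a ∈
        nonZeroDivisors (R ⧸ Ideal.map (algebraMap A R) p)) :
    a ∈ nonZeroDivisors R := by
  by_contra hreg
  set Q : Ideal A → Prop := fun I =>
    ∀ r : R, a * r ∈ Ideal.map (algebraMap A R) I → r ∈ Ideal.map (algebraMap A R) I with hQdef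
  set S : Set (Ideal A) := {I | ¬ Q I} with hS
  have hbot : (⊥ : Ideal A) ∈ S := by
    intro hQbot
    apply hreg
    rw [mem_nonZeroDivisors_iff_right]
    intro r hr
    have := hQbot r (by rw [Ideal.map_bot]; simpa [mul_comm] using hr)
    simpa [Ideal.map_bot] using this
  obtain ⟨I, hIS, hImax⟩ := (set_has_maximal_iff_noetherian.mpr inferInstance) S ⟨⊥, hbot⟩
  have hQtop : Q ⊤ := by
    intro r _
    simp [Ideal.map_top]
  by_cases hp : Ideal.IsPrime I
  · apply hIS
    intro r hr
    have h0 : (Ideal.Quotient.mk (Ideal.map (algebraMap A R) I) r) *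
        (Ideal.Quotient.mk (Ideal.map (algebraMap A R) I) a) = 0 := by
      rw [← map_mul, Ideal.Quotient.eq_zero_iff_mem, mul_comm]
      exact hr
    have := (h I hp).2 _ h0
    rwa [Ideal.Quotient.eq_zero_iff_mem] at this
  · have hItop : I ≠ ⊤ := fun hI => hIS (hI ▸ hQtop)
    rw [Ideal.isPrime_iff] at hp; rw [not_and_or] at hp
    rcases hp with hp | hp
    · exact absurd hItop (by simpa using hp)
    push_neg at hp
    obtain ⟨x, y, hxy, hx, hy⟩ := hp
    set J := I.colon (Ideal.span {x}) with hJ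
    set I' := I ⊔ Ideal.span {x} with hI'
    have hIJ : I < J := by
      constructor
      · intro z hz
        exact Ideal.mem_colon_span_singleton.mpr (Ideal.mul_mem_right x I hz)
      · intro hle
        exact hy (hle (Ideal.mem_colon_span_singleton.mpr (by rw [mul_comm]; exact hxy)))
    have hII' : I < I' := by
      refine lt_of_le_of_ne le_sup_left fun he => hx ?_
      rw [he, hI']
      exact Submodule.mem_sup_right (Ideal.subset_span rfl)
    have hQJ : Q J := by by_contra hq; exact hImax J hq hIJ
    have hQI' : Q I' := by by_contra hq; exact hImax I' hq hII'
    apply hIS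
    intro r hr
    have hr' : r ∈ Ideal.map (algebraMap A R) I' :=
      hQI' r (Ideal.map_mono le_sup_left hr)
    rw [hI', Ideal.map_sup] at hr'
    obtain ⟨m, hm, w, hw, hmw⟩ := Submodule.mem_sup.mp hr'
    rw [Ideal.map_span, Set.image_singleton, Ideal.mem_span_singleton'] at hw
    obtain ⟨s, rfl⟩ := hw
    have hxas : algebraMap A R x * (a * s) ∈ Ideal.map (algebraMap A R) I := by
      have : a * r - a * m = a * (s * algebraMap A R x) := by rw [← mul_sub, ← hmw]; ring_nf
      have h2 : a * (s * algebraMap A R x) ∈ Ideal.map (algebraMap A R) I := by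
        rw [← this]
        exact Submodule.sub_mem _ hr (Ideal.mul_mem_left _ a hm)
      convert h2 using 1
      ring
    have has : a * s ∈ Ideal.map (algebraMap A R) J :=
      key_colon_flat A R I x (a * s) hxas
    have hs : s ∈ Ideal.map (algebraMap A R) J := hQJ s has
    have hxJ : Ideal.span {x} * J ≤ I := by
      rw [Ideal.mul_le]
      intro u hu z hz
      rw [Ideal.mem_span_singleton'] at hu
      obtain ⟨c, rfl⟩ := hu
      have hz' : z * x ∈ I := Ideal.mem_colon_span_singleton.mp hz
      have : c * x * z = c * (z * x) := by ring
      rw [this]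
      exact Ideal.mul_mem_left I c hz'
    have hxs : algebraMap A R x * s ∈ Ideal.map (algebraMap A R) I := by
      have h1 : algebraMap A R x ∈ Ideal.map (algebraMap A R) (Ideal.span {x}) :=
        Ideal.mem_map_of_mem _ (Ideal.subset_span rfl)
      have h2 := Ideal.mul_mem_mul h1 hs
      rw [← Ideal.map_mul] at h2
      exact Ideal.map_mono hxJ h2
    rw [← hmw]
    exact Submodule.add_mem _ hm (by rw [mul_comm] at hxs; exact hxs)
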